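/- As p → ∞ through the primes, the ratio N_p(g)/N_p(2) of the number of gaps equal to g in the cycle of gaps 𝒢(p#) to the number of gaps equal to 2 in 𝒢(p#) converges to 4/3 for g = 10 and g = 20, to 6/5 for g = 14 and g = 28, to 10/9 for g = 22, and to 12/11 for g = 26. -/
import Mathlib


open Finset

/-- `b` is the next totative of `P` after `a`: `a < b`, `b` is coprime to `P`,
and no integer strictly between `a` and `b` is coprime to `P`. -/
def IsNextTot (P a b : ℕ) : Prop :=
  a < b ∧ Nat.Coprime b P ∧ ∀ x, a < x → x < b → ¬ Nat.Coprime x P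

/-- Starting at `r`, the successive totatives of `P` after `r` occur at the
successive partial sums of the list of gaps `c`. -/
def MatchesGaps (P : ℕ) : ℕ → List ℕ → Prop
  | _, [] => True
  | r, c :: cs => IsNextTot P r (r + c) ∧ MatchesGaps P (r + c) cs

open scoped Classical in
/-- `Ncount p s` : the number of (cyclic) occurrences of the constellation `s`
in the cycle of gaps `𝒢(p#)`.  Since the pattern of coprimality to `p#` is
periodic with period `p#`, this is the number of totatives `r ∈ [1, p#]` of `p#`
at which the gap pattern `s` begins. -/
noncomputable def Ncount (p : ℕ) (s : List ℕ) : ℕ :=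
  ((Finset.Icc 1 (primorial p)).filter
    (fun r => Nat.Coprime r (primorial p) ∧ MatchesGaps (primorial p) r s)).card

open scoped Classical in
/-- `nCount p g j` : the number of (cyclic) occurrences in `𝒢(p#)` of
constellations of length `j` with sum `g` (the driving terms of length `j`
for the gap `g`). -/
noncomputable def nCount (p g j : ℕ) : ℕ :=
  ((Finset.Icc 1 (primorial p)).filter
    (fun r => Nat.Coprime r (primorial p) ∧
      ∃ c : List ℕ, c.length = j ∧ c.sum = g ∧ MatchesGaps (primorial p) r c)).card

open scoped Classical

noncomputable def zc (n : ℕ) (S : Finset ℕ) : ℕ :=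
  ((Finset.Icc 1 n).filter fun r => ∀ s ∈ S, Nat.Coprime (r + s) n).card

lemma isUnit_prod_iff {M N : Type*} [Monoid M] [Monoid N] {x : M × N} :
    IsUnit x ↔ IsUnit x.1 ∧ IsUnit x.2 := by
  constructor
  · intro h; exact ⟨h.map (MonoidHom.fst M N), h.map (MonoidHom.snd M N)⟩
  · rintro ⟨⟨u, hu⟩, ⟨v, hv⟩⟩
    exact ⟨MulEquiv.prodUnits.symm (u, v), by simp [MulEquiv.prodUnits, hu, hv, Prod.ext_iff]⟩

lemma ringEquiv_isUnit_iff {R S : Type*} [Semiring R] [Semiring S] (e : R ≃+* S) (x : R) :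
    IsUnit (e x) ↔ IsUnit x :=
  ⟨fun h => by simpa using h.map e.symm.toRingHom, fun h => h.map e.toRingHom⟩

lemma zmod_lift_cast {n : ℕ} [NeZero n] (a : ZMod n) :
    ((if a.val = 0 then n else a.val : ℕ) : ZMod n) = a := by
  split_ifs with h
  · rw [ZMod.natCast_self, ← ZMod.natCast_zmod_val a, h]; simp
  · exact ZMod.natCast_zmod_val a

lemma card_Icc_filter_eq (n : ℕ) [NeZero n] (Q : ZMod n → Prop) :
    ((Finset.Icc 1 n).filter fun r : ℕ => Q (r : ZMod n)).card
      = (Finset.univ.filter Q).card := by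
  have hn : 0 < n := Nat.pos_of_ne_zero (NeZero.ne n)
  refine Finset.card_bij' (fun r _ => (r : ZMod n))
    (fun a _ => if a.val = 0 then n else a.val) ?_ ?_ ?_ ?_
  · intro r hr
    simp only [mem_filter, mem_Icc] at hr ⊢
    exact ⟨mem_univ _, hr.2⟩
  · intro a ha
    simp only [mem_filter, mem_Icc]
    have hval := ZMod.val_lt a
    refine ⟨⟨?_, ?_⟩, ?_⟩
    · split_ifs <;> omega
    · split_ifs <;> omega
    · rw [zmod_lift_cast a]; exact (mem_filter.mp ha).2
  · intro r hr
    simp only [mem_filter, mem_Icc] at hr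
    obtain ⟨⟨h1, h2⟩, _⟩ := hr
    rcases eq_or_lt_of_le h2 with rfl | hlt
    · simp [ZMod.natCast_self]
    · show (if ((r : ZMod n)).val = 0 then n else ((r : ZMod n)).val) = r
      rw [ZMod.val_cast_of_lt hlt, if_neg (by omega)]
  · intro a _
    exact zmod_lift_cast a

lemma zc_eq_zmod_count (n : ℕ) [NeZero n] (S : Finset ℕ) :
    zc n S = (Finset.univ.filter
      fun a : ZMod n => ∀ s ∈ S, IsUnit (a + (s : ZMod n))).card := by
  rw [zc]
  have h1 : ((Finset.Icc 1 n).filter fun r => ∀ s ∈ S, Nat.Coprime (r + s) n)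
      = ((Finset.Icc 1 n).filter fun r : ℕ =>
          (fun a : ZMod n => ∀ s ∈ S, IsUnit (a + (s : ZMod n))) (r : ZMod n)) := by
    apply Finset.filter_congr
    intro r _
    simp only [eq_iff_iff]
    constructor
    · intro h s hs
      have := (ZMod.isUnit_iff_coprime (r + s) n).mpr (h s hs)
      push_cast at this
      exact this
    · intro h s hs
      have := h s hs
      rw [show ((r : ZMod n) + (s : ZMod n)) = ((r + s : ℕ) : ZMod n) by push_cast; ring] at this
      exact (ZMod.isUnit_iff_coprime (r + s) n).mp this
  rw [h1]
  convert card_Icc_filter_eq n (fun a : ZMod n => ∀ s ∈ S, IsUnit (a + (s : ZMod n))) using 3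

lemma zc_mul {m n : ℕ} [NeZero m] [NeZero n] (h : Nat.Coprime m n) (S : Finset ℕ) :
    zc (m * n) S = zc m S * zc n S := by
  haveI : NeZero (m * n) := ⟨mul_ne_zero (NeZero.ne m) (NeZero.ne n)⟩
  rw [zc_eq_zmod_count, zc_eq_zmod_count, zc_eq_zmod_count]
  let e := ZMod.chineseRemainder h
  have key : (Finset.univ.filter fun a : ZMod (m * n) => ∀ s ∈ S, IsUnit (a + (s : ZMod (m * n)))).card
      = (Finset.univ.filter fun x : ZMod m × ZMod n =>
          (∀ s ∈ S, IsUnit (x.1 + (s : ZMod m))) ∧ (∀ s ∈ S, IsUnit (x.2 + (s : ZMod n)))).card := by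
    apply Finset.card_equiv e.toEquiv
    intro a
    simp only [mem_filter, mem_univ, true_and]
    have step : ∀ s : ℕ, IsUnit (a + (s : ZMod (m * n))) ↔
        IsUnit ((e a).1 + (s : ZMod m)) ∧ IsUnit ((e a).2 + (s : ZMod n)) := by
      intro s
      rw [← ringEquiv_isUnit_iff e, map_add, map_natCast]
      rw [isUnit_prod_iff]
      simp
    constructor
    · intro ha
      exact ⟨fun s hs => ((step s).mp (ha s hs)).1, fun s hs => ((step s).mp (ha s hs)).2⟩
    · rintro ⟨h1, h2⟩ s hs
      exact (step s).mpr ⟨h1 s hs, h2 s hs⟩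
  rw [key]
  have : (Finset.univ.filter fun x : ZMod m × ZMod n =>
          (∀ s ∈ S, IsUnit (x.1 + (s : ZMod m))) ∧ (∀ s ∈ S, IsUnit (x.2 + (s : ZMod n))))
      = (Finset.univ.filter fun a : ZMod m => ∀ s ∈ S, IsUnit (a + (s : ZMod m))) ×ˢ
        (Finset.univ.filter fun a : ZMod n => ∀ s ∈ S, IsUnit (a + (s : ZMod n))) := by
    ext x
    simp only [Finset.mem_filter, Finset.mem_univ, true_and, Finset.mem_product]
  rw [this, Finset.card_product]

lemma zc_prime {q : ℕ} (hq : q.Prime) (S : Finset ℕ) :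
    zc q S = q - (S.image fun s : ℕ => (s : ZMod q)).card := by
  haveI : NeZero q := ⟨hq.pos.ne'⟩
  haveI : Fact q.Prime := ⟨hq⟩
  rw [zc_eq_zmod_count]
  have hset : (Finset.univ.filter fun a : ZMod q => ∀ s ∈ S, IsUnit (a + (s : ZMod q)))
      = Finset.univ \ (S.image fun s : ℕ => -(s : ZMod q)) := by
    ext a
    simp only [mem_filter, mem_univ, true_and, mem_sdiff, mem_image, not_exists]
    constructor
    · intro h x hx
      obtain ⟨hxS, hneg⟩ := hx
      have := h x hxS
      rw [← hneg] at this
      simp at this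
    · intro h s hs
      rw [isUnit_iff_ne_zero]
      intro hz
      exact h s ⟨hs, by linear_combination -hz⟩
  rw [hset, Finset.card_sdiff_of_subset (Finset.subset_univ _), Finset.card_univ, ZMod.card]
  congr 1
  have : (S.image fun s : ℕ => -(s : ZMod q)) = (S.image fun s : ℕ => (s : ZMod q)).image Neg.neg := by
    rw [Finset.image_image]; rfl
  rw [this, Finset.card_image_of_injective _ neg_injective]

lemma zc_one (S : Finset ℕ) : zc 1 S = 1 := by
  rw [zc]
  have : ((Finset.Icc 1 1).filter fun r => ∀ s ∈ S, Nat.Coprime (r + s) 1)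
      = Finset.Icc 1 1 := by
    apply Finset.filter_true_of_mem
    intro r _ s _
    exact Nat.coprime_one_right _
  rw [this]
  simp

lemma zc_prod (F : Finset ℕ) (hF : ∀ q ∈ F, q.Prime) (S : Finset ℕ) :
    zc (∏ q ∈ F, q) S = ∏ q ∈ F, zc q S := by
  induction F using Finset.cons_induction with
  | empty => simpa using zc_one S
  | cons q F hq ih =>
    have hqp : q.Prime := hF q (Finset.mem_cons_self q F)
    have hFp : ∀ r ∈ F, r.Prime := fun r hr => hF r (Finset.mem_cons.mpr (Or.inr hr))
    have hcop : Nat.Coprime q (∏ r ∈ F, r) := by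
      apply Nat.Coprime.prod_right
      intro r hr
      exact (Nat.coprime_primes hqp (hFp r hr)).mpr (fun h => hq (h ▸ hr))
    haveI : NeZero q := ⟨hqp.pos.ne'⟩
    haveI : NeZero (∏ r ∈ F, r) := ⟨(Finset.prod_pos fun r hr => (hFp r hr).pos).ne'⟩
    rw [Finset.prod_cons, Finset.prod_cons, zc_mul hcop, ih hFp]

lemma primorial_eq (p : ℕ) :
    primorial p = ∏ q ∈ (Finset.range (p + 1)).filter Nat.Prime, q := rfl

lemma zc_primorial (p : ℕ) (S : Finset ℕ) :
    zc (primorial p) S = ∏ q ∈ (Finset.range (p + 1)).filter Nat.Prime, zc q S := by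
  rw [primorial_eq]
  exact zc_prod _ (fun q hq => (Finset.mem_filter.mp hq).2) S

lemma zc_prime_pair {q : ℕ} (hq : q.Prime) (g : ℕ) :
    zc q {0, g} = q - (if q ∣ g then 1 else 2) := by
  haveI : NeZero q := ⟨hq.pos.ne'⟩
  rw [zc_prime hq]
  congr 1
  rw [Finset.image_insert, Finset.image_singleton, Nat.cast_zero]
  by_cases h : q ∣ g
  · have hg : (g : ZMod q) = 0 := (ZMod.natCast_eq_zero_iff g q).mpr h
    simp [hg, h]
  · have hg : (g : ZMod q) ≠ 0 := fun hc => h ((ZMod.natCast_eq_zero_iff g q).mp hc)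
    rw [if_neg h, Finset.card_insert_of_notMem (by simp [eq_comm, hg]), Finset.card_singleton]

lemma zc_prime_le {q : ℕ} (hq : q.Prime) (S : Finset ℕ) : zc q S ≤ q := by
  rw [zc_prime hq]; exact Nat.sub_le _ _

lemma zc_prime_triple {q t g : ℕ} (hq : q.Prime) (hg : g < q) (h0 : 0 < t) (htg : t < g) :
    zc q {0, t, g} = q - 3 := by
  haveI : NeZero q := ⟨hq.pos.ne'⟩
  rw [zc_prime hq]
  congr 1
  have htq : t < q := htg.trans hg
  have hinj : ∀ a b : ℕ, a < q → b < q → (a : ZMod q) = (b : ZMod q) → a = b := by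
    intro a b ha hb hab
    have := congrArg ZMod.val hab
    rwa [ZMod.val_cast_of_lt ha, ZMod.val_cast_of_lt hb] at this
  rw [show ({0, t, g} : Finset ℕ).image (fun s : ℕ => (s : ZMod q))
      = {(0 : ZMod q), (t : ZMod q), (g : ZMod q)} by
    simp [Finset.image_insert, Finset.image_singleton]]
  rw [Finset.card_insert_of_notMem, Finset.card_insert_of_notMem, Finset.card_singleton]
  · simp only [Finset.mem_singleton]
    intro hc
    exact absurd (hinj t g htq hg hc) htg.ne
  · simp only [Finset.mem_insert, Finset.mem_singleton]
    push_neg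
    constructor
    · intro hc
      exact absurd (hinj 0 t hq.pos htq (by simpa using hc)) h0.ne
    · intro hc
      exact absurd (hinj 0 g hq.pos hg (by simpa using hc)) (h0.trans htg).ne

lemma matchesGaps_single (P r g : ℕ) :
    MatchesGaps P r [g] ↔ IsNextTot P r (r + g) := by
  simp [MatchesGaps]

lemma two_dvd_primorial {p : ℕ} (hp : p.Prime) : 2 ∣ primorial p := by
  rw [primorial_eq]
  apply Finset.dvd_prod_of_mem
  simp only [Finset.mem_filter, Finset.mem_range]
  exact ⟨by have := hp.two_le; omega, Nat.prime_two⟩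

lemma Ncount_two {p : ℕ} (hp : p.Prime) : Ncount p [2] = zc (primorial p) {0, 2} := by
  set n := primorial p with hn
  have h2 : 2 ∣ n := two_dvd_primorial hp
  rw [Ncount, zc]
  congr 1
  apply Finset.filter_congr
  intro r _
  simp only [eq_iff_iff, matchesGaps_single, IsNextTot]
  constructor
  · rintro ⟨hr, -, hrg, -⟩ s hs
    rcases Finset.mem_insert.mp hs with rfl | hs
    · simpa using hr
    · rw [Finset.mem_singleton.mp hs]; exact hrg
  · intro h
    have hr : Nat.Coprime r n := by simpa using h 0 (by simp)
    have hrg : Nat.Coprime (r + 2) n := h 2 (by simp)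
    have hodd : ¬ (2 ∣ r) := by
      intro hdvd
      have : (2 : ℕ) ∣ Nat.gcd r n := Nat.dvd_gcd hdvd h2
      rw [hr] at this
      omega
    refine ⟨hr, by omega, hrg, ?_⟩
    intro x hx1 hx2
    have hx : x = r + 1 := by omega
    subst hx
    intro hc
    have : (2 : ℕ) ∣ Nat.gcd (r + 1) n := Nat.dvd_gcd (by omega) h2
    rw [hc] at this
    omega

lemma Ncount_le_zc {p : ℕ} (g : ℕ) (hg : 0 < g) :
    Ncount p [g] ≤ zc (primorial p) {0, g} := by
  set n := primorial p with hn
  rw [Ncount, zc]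
  apply Finset.card_le_card
  intro r hr
  rw [Finset.mem_filter] at hr ⊢
  obtain ⟨hIcc, hr, hm⟩ := hr
  rw [matchesGaps_single] at hm
  obtain ⟨-, hrg, -⟩ := hm
  refine ⟨hIcc, ?_⟩
  intro s hs
  rcases Finset.mem_insert.mp hs with rfl | hs
  · simpa using hr
  · rw [Finset.mem_singleton.mp hs]; exact hrg

lemma zc_le_Ncount_add {p : ℕ} (g : ℕ) (hg : 0 < g) :
    zc (primorial p) {0, g} ≤ Ncount p [g]
      + ∑ t ∈ Finset.Ioo 0 g, zc (primorial p) {0, t, g} := by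
  set n := primorial p with hn
  have hsub : ((Finset.Icc 1 n).filter fun r => ∀ s ∈ ({0, g} : Finset ℕ), Nat.Coprime (r + s) n)
      ⊆ ((Finset.Icc 1 n).filter
            (fun r => Nat.Coprime r n ∧ MatchesGaps n r [g]))
        ∪ (Finset.Ioo 0 g).biUnion (fun t => (Finset.Icc 1 n).filter
            fun r => ∀ s ∈ ({0, t, g} : Finset ℕ), Nat.Coprime (r + s) n) := by
    intro r hr
    rw [Finset.mem_filter] at hr
    obtain ⟨hIcc, hall⟩ := hr
    have hr0 : Nat.Coprime r n := by simpa using hall 0 (by simp)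
    have hrg : Nat.Coprime (r + g) n := hall g (by simp)
    by_cases hmid : ∃ t, 0 < t ∧ t < g ∧ Nat.Coprime (r + t) n
    · obtain ⟨t, ht0, htg, htc⟩ := hmid
      apply Finset.mem_union_right
      rw [Finset.mem_biUnion]
      refine ⟨t, Finset.mem_Ioo.mpr ⟨ht0, htg⟩, ?_⟩
      rw [Finset.mem_filter]
      refine ⟨hIcc, ?_⟩
      intro s hs
      rcases Finset.mem_insert.mp hs with rfl | hs
      · simpa using hr0
      rcases Finset.mem_insert.mp hs with rfl | hs
      · exact htc
      · rw [Finset.mem_singleton.mp hs]; exact hrg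
    · apply Finset.mem_union_left
      rw [Finset.mem_filter]
      refine ⟨hIcc, hr0, ?_⟩
      rw [matchesGaps_single]
      refine ⟨by omega, hrg, ?_⟩
      intro x hx1 hx2 hc
      exact hmid ⟨x - r, by omega, by omega, by rwa [show r + (x - r) = x by omega]⟩
  calc zc n {0, g} ≤ _ := Finset.card_le_card hsub
    _ ≤ _ + _ := Finset.card_union_le _ _
    _ ≤ Ncount p [g] + ∑ t ∈ Finset.Ioo 0 g, zc n {0, t, g} := by
        apply Nat.add_le_add_left
        exact Finset.card_biUnion_le

lemma ratio_eq {p g Q : ℕ} (hp : p.Prime) (hQ : Q.Prime) (hQ2 : Q ≠ 2) (hQg : Q ∣ g)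
    (hsame : ∀ q : ℕ, q.Prime → q ≠ Q → (q ∣ g ↔ q ∣ 2)) (hQp : Q ≤ p) :
    (Q - 2) * zc (primorial p) {0, g} = (Q - 1) * zc (primorial p) {0, 2} := by
  rw [zc_primorial, zc_primorial]
  set F := (Finset.range (p + 1)).filter Nat.Prime with hF
  have hQF : Q ∈ F := by
    rw [hF, Finset.mem_filter, Finset.mem_range]
    exact ⟨by omega, hQ⟩
  rw [← Finset.mul_prod_erase F _ hQF, ← Finset.mul_prod_erase F _ hQF]
  have h1 : zc Q {0, g} = Q - 1 := by rw [zc_prime_pair hQ, if_pos hQg]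
  have h2 : zc Q {0, 2} = Q - 2 := by
    rw [zc_prime_pair hQ, if_neg]
    intro h
    exact hQ2 ((Nat.prime_dvd_prime_iff_eq hQ Nat.prime_two).mp h)
  have h3 : ∀ q ∈ F.erase Q, zc q {0, g} = zc q {0, 2} := by
    intro q hq
    obtain ⟨hne, hqF⟩ := Finset.mem_erase.mp hq
    have hqp : q.Prime := (Finset.mem_filter.mp hqF).2
    rw [zc_prime_pair hqp, zc_prime_pair hqp, if_congr (hsame q hqp hne) rfl rfl]
  rw [Finset.prod_congr rfl h3, h1, h2]
  ring

lemma hsame10 : ∀ q : ℕ, q.Prime → q ≠ 5 → (q ∣ 10 ↔ q ∣ 2) := by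
  intro q hq hne
  have h2 := hq.two_le
  constructor
  · intro h
    have hle : q ≤ 10 := Nat.le_of_dvd (by norm_num) h
    interval_cases q <;> first | (exact absurd rfl hne) | (revert hq h; decide)
  · intro h
    have : q = 2 := (Nat.prime_dvd_prime_iff_eq hq Nat.prime_two).mp h
    subst this; norm_num

noncomputable def Fp (p : ℕ) : Finset ℕ := (Finset.range (p + 1)).filter Nat.Prime

noncomputable def Ebig (p : ℕ) : ℝ :=
  ∏ q ∈ Fp p \ Fp 28, (1 - 1 / ((q : ℝ) - 2))

lemma mem_Dbig {p q : ℕ} (hq : q ∈ Fp p \ Fp 28) : q.Prime ∧ 29 ≤ q := by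
  obtain ⟨h1, h2⟩ := Finset.mem_sdiff.mp hq
  rw [Fp, Finset.mem_filter, Finset.mem_range] at h1 h2
  push_neg at h2
  exact ⟨h1.2, by by_contra hc; exact absurd (h2 (by omega)) (by simpa using h1.2)⟩

lemma Ebig_nonneg (p : ℕ) : 0 ≤ Ebig p := by
  apply Finset.prod_nonneg
  intro q hq
  have ⟨hqp, h29⟩ := mem_Dbig hq
  have : (29 : ℝ) ≤ (q : ℝ) := by exact_mod_cast h29
  have h2 : (1 : ℝ) ≤ (q : ℝ) - 2 := by linarith
  have : 1 / ((q : ℝ) - 2) ≤ 1 := by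
    rw [div_le_one (by linarith)]; linarith
  linarith

lemma sum_primes_tendsto :
    Filter.Tendsto (fun p : ℕ => ∑ q ∈ Fp p, (1 : ℝ) / q) Filter.atTop Filter.atTop := by
  have hnn : ∀ n, 0 ≤ Set.indicator {p : ℕ | p.Prime} (fun n : ℕ => (1 : ℝ) / n) n := by
    intro n
    apply Set.indicator_nonneg
    intro k _
    positivity
  have h := (not_summable_iff_tendsto_nat_atTop_of_nonneg hnn).mp not_summable_one_div_on_primes
  have hcomp : Filter.Tendsto (fun p : ℕ =>
      ∑ i ∈ Finset.range (p + 1), Set.indicator {p : ℕ | p.Prime} (fun n : ℕ => (1 : ℝ) / n) i)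
      Filter.atTop Filter.atTop :=
    h.comp (Filter.tendsto_add_atTop_nat 1)
  apply hcomp.congr
  intro p
  rw [Fp, Finset.sum_filter]
  apply Finset.sum_congr rfl
  intro q _
  rw [Set.indicator_apply]
  simp [Set.mem_setOf_eq]

lemma Ebig_tendsto_zero : Filter.Tendsto Ebig Filter.atTop (nhds 0) := by
  have C : ℝ := ∑ q ∈ Fp 28, (1 : ℝ) / q
  have key : ∀ p : ℕ, 28 ≤ p →
      Ebig p ≤ Real.exp ((∑ q ∈ Fp 28, (1 : ℝ) / q) - ∑ q ∈ Fp p, (1 : ℝ) / q) := by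
    intro p hp
    have hsub : Fp 28 ⊆ Fp p := by
      intro q hq
      rw [Fp, Finset.mem_filter, Finset.mem_range] at hq ⊢
      exact ⟨by omega, hq.2⟩
    have hstep : Ebig p ≤ ∏ q ∈ Fp p \ Fp 28, Real.exp (-(1 / (q : ℝ))) := by
      apply Finset.prod_le_prod
      · intro q hq
        have ⟨hqp, h29⟩ := mem_Dbig hq
        have : (29 : ℝ) ≤ (q : ℝ) := by exact_mod_cast h29
        have : 1 / ((q : ℝ) - 2) ≤ 1 := by rw [div_le_one (by linarith)]; linarith
        linarith
      · intro q hq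
        have ⟨hqp, h29⟩ := mem_Dbig hq
        have hq29 : (29 : ℝ) ≤ (q : ℝ) := by exact_mod_cast h29
        have h1 : 1 - 1 / ((q : ℝ) - 2) ≤ Real.exp (-(1 / ((q : ℝ) - 2))) := by
          have := Real.add_one_le_exp (-(1 / ((q : ℝ) - 2)))
          linarith
        have h2 : Real.exp (-(1 / ((q : ℝ) - 2))) ≤ Real.exp (-(1 / (q : ℝ))) := by
          apply Real.exp_le_exp.mpr
          have hq0 : (0 : ℝ) < (q : ℝ) := by linarith
          have hq2 : (0 : ℝ) < (q : ℝ) - 2 := by linarith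
          have : 1 / (q : ℝ) ≤ 1 / ((q : ℝ) - 2) := by
            apply one_div_le_one_div_of_le hq2; linarith
          linarith
        linarith
    rw [← Real.exp_sum] at hstep
    refine hstep.trans (Real.exp_le_exp.mpr ?_)
    have := Finset.sum_sdiff (f := fun q : ℕ => (1 : ℝ) / q) hsub
    have hsum : ∑ q ∈ Fp p \ Fp 28, (1 : ℝ) / q
        = (∑ q ∈ Fp p, (1 : ℝ) / q) - ∑ q ∈ Fp 28, (1 : ℝ) / q := by linarith
    rw [Finset.sum_neg_distrib]
    linarith
  have hup : Filter.Tendsto (fun p : ℕ =>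
      Real.exp ((∑ q ∈ Fp 28, (1 : ℝ) / q) - ∑ q ∈ Fp p, (1 : ℝ) / q))
      Filter.atTop (nhds 0) := by
    apply Real.tendsto_exp_atBot.comp
    apply Filter.tendsto_atBot_add_const_left
    rw [Filter.tendsto_neg_atBot_iff]
    exact sum_primes_tendsto
  apply tendsto_of_tendsto_of_tendsto_of_le_of_le' (tendsto_const_nhds) hup
  · exact Filter.Eventually.of_forall fun p => Ebig_nonneg p
  · filter_upwards [Filter.eventually_ge_atTop 28] with p hp
    exact key p hp

lemma zc2_pos (p : ℕ) : 0 < zc (primorial p) {0, 2} := by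
  rw [zc_primorial]
  apply Finset.prod_pos
  intro q hq
  have hqp : q.Prime := (Finset.mem_filter.mp hq).2
  have h2 := hqp.two_le
  rw [zc_prime_pair hqp]
  by_cases h : q ∣ 2
  · have : q = 2 := (Nat.prime_dvd_prime_iff_eq hqp Nat.prime_two).mp h
    subst this; norm_num
  · have : q ≠ 2 := fun hc => h (by rw [hc])
    rw [if_neg h]; omega

noncomputable def C0 : ℝ := ∏ q ∈ Fp 28, (q : ℝ)

lemma C0_pos : 0 < C0 := by
  apply Finset.prod_pos
  intro q hq
  have hqp : q.Prime := (Finset.mem_filter.mp hq).2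
  exact_mod_cast hqp.pos

lemma zc_Fp (p : ℕ) (S : Finset ℕ) : zc (primorial p) S = ∏ q ∈ Fp p, zc q S :=
  zc_primorial p S

lemma triple_bound {p t g : ℕ} (hp28 : 28 < p) (h0 : 0 < t) (htg : t < g) (hg : g ≤ 28) :
    (zc (primorial p) {0, t, g} : ℝ) ≤ C0 * Ebig p * (zc (primorial p) {0, 2} : ℝ) := by
  have hsub : Fp 28 ⊆ Fp p := by
    intro q hq
    rw [Fp, Finset.mem_filter, Finset.mem_range] at hq ⊢
    exact ⟨by omega, hq.2⟩
  have hD : ∀ q ∈ Fp p \ Fp 28, q.Prime ∧ 29 ≤ q := fun q hq => mem_Dbig hq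
  have e1 : zc (primorial p) {0, t, g}
      = (∏ q ∈ Fp p \ Fp 28, zc q {0, t, g}) * ∏ q ∈ Fp 28, zc q {0, t, g} := by
    rw [zc_Fp, ← Finset.prod_sdiff hsub]
  have e2 : zc (primorial p) {0, 2}
      = (∏ q ∈ Fp p \ Fp 28, zc q {0, 2}) * ∏ q ∈ Fp 28, zc q {0, 2} := by
    rw [zc_Fp, ← Finset.prod_sdiff hsub]
  have hDtriple : ∀ q ∈ Fp p \ Fp 28, zc q {0, t, g} = q - 3 := by
    intro q hq
    obtain ⟨hqp, h29⟩ := hD q hq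
    exact zc_prime_triple hqp (by omega) h0 htg
  have hDpair : ∀ q ∈ Fp p \ Fp 28, zc q {0, 2} = q - 2 := by
    intro q hq
    obtain ⟨hqp, h29⟩ := hD q hq
    rw [zc_prime_pair hqp, if_neg]
    intro hdvd
    have := Nat.le_of_dvd (by norm_num) hdvd
    omega
  -- real versions of the sdiff products
  have hprod3 : (∏ q ∈ Fp p \ Fp 28, (zc q {0, t, g} : ℝ))
      = (∏ q ∈ Fp p \ Fp 28, (zc q {0, 2} : ℝ)) * Ebig p := by
    rw [Ebig, ← Finset.prod_mul_distrib]
    apply Finset.prod_congr rfl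
    intro q hq
    obtain ⟨hqp, h29⟩ := hD q hq
    rw [hDtriple q hq, hDpair q hq]
    have hq29 : (29 : ℝ) ≤ (q : ℝ) := by exact_mod_cast h29
    have hc3 : ((q - 3 : ℕ) : ℝ) = (q : ℝ) - 3 := by
      rw [Nat.cast_sub (by omega)]; norm_num
    have hc2 : ((q - 2 : ℕ) : ℝ) = (q : ℝ) - 2 := by
      rw [Nat.cast_sub (by omega)]; norm_num
    rw [hc3, hc2]
    have hne : (q : ℝ) - 2 ≠ 0 := by linarith
    rw [mul_sub, mul_one, mul_one_div, div_self hne]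
    ring
  have hsmall : (∏ q ∈ Fp 28, (zc q {0, t, g} : ℝ)) ≤ C0 := by
    rw [C0]
    apply Finset.prod_le_prod
    · intro q _; exact Nat.cast_nonneg _
    · intro q hq
      have hqp : q.Prime := (Finset.mem_filter.mp hq).2
      exact_mod_cast zc_prime_le hqp _
  have hsmall2 : (1 : ℝ) ≤ ∏ q ∈ Fp 28, (zc q {0, 2} : ℝ) := by
    have step : ∏ _q ∈ Fp 28, (1 : ℝ) ≤ ∏ q ∈ Fp 28, (zc q {0, 2} : ℝ) := by
      apply Finset.prod_le_prod
      · intro q _; norm_num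
      · intro q hq
        have hqp : q.Prime := (Finset.mem_filter.mp hq).2
        have h2 := hqp.two_le
        have : 0 < zc q {0, 2} := by
          rw [zc_prime_pair hqp]
          by_cases h : q ∣ 2
          · have : q = 2 := (Nat.prime_dvd_prime_iff_eq hqp Nat.prime_two).mp h
            subst this; norm_num
          · have : q ≠ 2 := fun hc => h (by rw [hc])
            rw [if_neg h]; omega
        exact_mod_cast this
    simpa using step
  have hDpos : (0 : ℝ) ≤ ∏ q ∈ Fp p \ Fp 28, (zc q {0, 2} : ℝ) := by
    apply Finset.prod_nonneg; intro q _; exact Nat.cast_nonneg _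
  calc (zc (primorial p) {0, t, g} : ℝ)
      = (∏ q ∈ Fp p \ Fp 28, (zc q {0, t, g} : ℝ)) * ∏ q ∈ Fp 28, (zc q {0, t, g} : ℝ) := by
        rw [e1]; push_cast; ring
    _ ≤ (∏ q ∈ Fp p \ Fp 28, (zc q {0, t, g} : ℝ)) * C0 := by
        apply mul_le_mul_of_nonneg_left hsmall
        apply Finset.prod_nonneg; intro q _; exact Nat.cast_nonneg _
    _ = C0 * Ebig p * ∏ q ∈ Fp p \ Fp 28, (zc q {0, 2} : ℝ) := by
        rw [hprod3]; ring
    _ ≤ C0 * Ebig p * ((∏ q ∈ Fp p \ Fp 28, (zc q {0, 2} : ℝ))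
          * ∏ q ∈ Fp 28, (zc q {0, 2} : ℝ)) := by
        apply mul_le_mul_of_nonneg_left _ (mul_nonneg C0_pos.le (Ebig_nonneg p))
        nlinarith [hDpos, hsmall2]
    _ = C0 * Ebig p * (zc (primorial p) {0, 2} : ℝ) := by
        rw [e2]; push_cast; ring

lemma main_limit {g Q : ℕ} (hQ : Q.Prime) (hQ2 : Q ≠ 2) (hQg : Q ∣ g)
    (hsame : ∀ q : ℕ, q.Prime → q ≠ Q → (q ∣ g ↔ q ∣ 2)) (hg0 : 0 < g) (hg28 : g ≤ 28)
    (hQ28 : Q ≤ 28) :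
    Filter.Tendsto (fun p : ℕ => (Ncount p [g] : ℝ) / (Ncount p [2] : ℝ))
      (Filter.atTop ⊓ Filter.principal {p : ℕ | p.Prime})
      (nhds (((Q : ℝ) - 1) / ((Q : ℝ) - 2))) := by
  set l := Filter.atTop ⊓ Filter.principal {p : ℕ | p.Prime} with hl
  have hQ3 : 3 ≤ Q := by
    have := hQ.two_le
    rcases Nat.lt_or_ge Q 3 with h | h
    · interval_cases Q
      · exact absurd rfl hQ2
    · exact h
  have hA : (0 : ℝ) < (Q : ℝ) - 2 := by
    have : (3 : ℝ) ≤ (Q : ℝ) := by exact_mod_cast hQ3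
    linarith
  set L : ℝ := ((Q : ℝ) - 1) / ((Q : ℝ) - 2) with hL
  have hEb : Filter.Tendsto (fun p => (g : ℝ) * C0 * Ebig p) l (nhds 0) := by
    have := (Ebig_tendsto_zero.mono_left (inf_le_left : l ≤ Filter.atTop)).const_mul ((g : ℝ) * C0)
    simpa using this
  have hlow : Filter.Tendsto (fun p : ℕ => L - (g : ℝ) * C0 * Ebig p) l (nhds L) := by
    have := (tendsto_const_nhds (x := L) (f := l)).sub hEb
    simpa using this
  have hev : ∀ᶠ p in l, p.Prime ∧ 29 ≤ p := by
    rw [hl, Filter.eventually_inf_principal]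
    filter_upwards [Filter.eventually_ge_atTop 29] with p h29 hp
    exact ⟨hp, h29⟩
  apply tendsto_of_tendsto_of_tendsto_of_le_of_le' hlow tendsto_const_nhds
  · -- lower bound
    filter_upwards [hev] with p hpev
    obtain ⟨hp, h29⟩ := hpev
    have hD2 : (0 : ℝ) < (Ncount p [2] : ℝ) := by
      rw [Ncount_two hp]; exact_mod_cast zc2_pos p
    have hexact : ((Q : ℝ) - 2) * (zc (primorial p) {0, g} : ℝ)
        = ((Q : ℝ) - 1) * (zc (primorial p) {0, 2} : ℝ) := by
      have h := ratio_eq (p := p) hp hQ hQ2 hQg hsame (by omega)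
      have h' := congrArg (fun k : ℕ => (k : ℝ)) h
      simp only [Nat.cast_mul, Nat.cast_sub (show 2 ≤ Q by omega),
        Nat.cast_sub (show 1 ≤ Q by omega)] at h'
      push_cast at h'
      exact h'
    rw [le_div_iff₀ hD2, Ncount_two hp]
    have hsum : (∑ t ∈ Finset.Ioo 0 g, zc (primorial p) {0, t, g} : ℝ)
        ≤ (g : ℝ) * (C0 * Ebig p * (zc (primorial p) {0, 2} : ℝ)) := by
      push_cast
      calc ∑ t ∈ Finset.Ioo 0 g, (zc (primorial p) {0, t, g} : ℝ)
          ≤ ∑ _t ∈ Finset.Ioo 0 g, C0 * Ebig p * (zc (primorial p) {0, 2} : ℝ) := by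
            apply Finset.sum_le_sum
            intro t ht
            obtain ⟨ht0, htg⟩ := Finset.mem_Ioo.mp ht
            exact triple_bound (by omega) ht0 htg hg28
        _ = ((g - 1 : ℕ) : ℝ) * (C0 * Ebig p * (zc (primorial p) {0, 2} : ℝ)) := by
            rw [Finset.sum_const, Nat.card_Ioo, nsmul_eq_mul]
            norm_num
        _ ≤ (g : ℝ) * (C0 * Ebig p * (zc (primorial p) {0, 2} : ℝ)) := by
            apply mul_le_mul_of_nonneg_right
            · exact_mod_cast Nat.sub_le g 1
            · have := C0_pos
              have := Ebig_nonneg p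
              have : (0 : ℝ) ≤ (zc (primorial p) {0, 2} : ℝ) := Nat.cast_nonneg _
              positivity
    have hcount : (zc (primorial p) {0, g} : ℝ)
        ≤ (Ncount p [g] : ℝ) + (g : ℝ) * (C0 * Ebig p * (zc (primorial p) {0, 2} : ℝ)) := by
      have h := zc_le_Ncount_add (p := p) g hg0
      have h' : (zc (primorial p) {0, g} : ℝ)
          ≤ (Ncount p [g] : ℝ) + (∑ t ∈ Finset.Ioo 0 g, zc (primorial p) {0, t, g} : ℝ) := by
        exact_mod_cast h
      linarith
    have hLz : L * (zc (primorial p) {0, 2} : ℝ) = (zc (primorial p) {0, g} : ℝ) := by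
      rw [hL]
      field_simp
      linarith [hexact]
    have hz2 : (0 : ℝ) ≤ (zc (primorial p) {0, 2} : ℝ) := Nat.cast_nonneg _
    have key : (L - (g : ℝ) * C0 * Ebig p) * (zc (primorial p) {0, 2} : ℝ)
        ≤ (Ncount p [g] : ℝ) := by
      have expand : (L - (g : ℝ) * C0 * Ebig p) * (zc (primorial p) {0, 2} : ℝ)
          = L * (zc (primorial p) {0, 2} : ℝ)
            - (g : ℝ) * (C0 * Ebig p * (zc (primorial p) {0, 2} : ℝ)) := by ring
      rw [expand, hLz]
      linarith
    exact key
  · -- upper bound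
    filter_upwards [hev] with p hpev
    obtain ⟨hp, h29⟩ := hpev
    have hD2 : (0 : ℝ) < (Ncount p [2] : ℝ) := by
      rw [Ncount_two hp]; exact_mod_cast zc2_pos p
    have hexact : ((Q : ℝ) - 2) * (zc (primorial p) {0, g} : ℝ)
        = ((Q : ℝ) - 1) * (zc (primorial p) {0, 2} : ℝ) := by
      have h := ratio_eq (p := p) hp hQ hQ2 hQg hsame (by omega)
      have h' := congrArg (fun k : ℕ => (k : ℝ)) h
      simp only [Nat.cast_mul, Nat.cast_sub (show 2 ≤ Q by omega),
        Nat.cast_sub (show 1 ≤ Q by omega)] at h'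
      push_cast at h'
      exact h'
    rw [div_le_iff₀ hD2, Ncount_two hp]
    have hLz : L * (zc (primorial p) {0, 2} : ℝ) = (zc (primorial p) {0, g} : ℝ) := by
      rw [hL]
      field_simp
      linarith [hexact]
    rw [hLz]
    exact_mod_cast Ncount_le_zc g hg0

lemma hsame_gen {G Q : ℕ} (hG : 2 ≤ G) (hdec : ∀ q : ℕ, q ≤ G → q.Prime → q ≠ Q → (q ∣ G ↔ q ∣ 2)) :
    ∀ q : ℕ, q.Prime → q ≠ Q → (q ∣ G ↔ q ∣ 2) := by
  intro q hq hne
  constructor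
  · intro h
    exact (hdec q (Nat.le_of_dvd (by omega) h) hq hne).mp h
  · intro h
    have hq2 : q = 2 := (Nat.prime_dvd_prime_iff_eq hq Nat.prime_two).mp h
    subst hq2
    by_cases hQ2 : (2 : ℕ) = Q
    · exact absurd hQ2 hne
    · exact (hdec 2 (by omega) Nat.prime_two hne).mpr h

lemma hsame20 : ∀ q : ℕ, q.Prime → q ≠ 5 → (q ∣ 20 ↔ q ∣ 2) := by
  apply hsame_gen (by norm_num)
  intro q hle hq hne
  interval_cases q <;> first | (exact absurd rfl hne) | (revert hq; decide)

lemma hsame14 : ∀ q : ℕ, q.Prime → q ≠ 7 → (q ∣ 14 ↔ q ∣ 2) := by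
  apply hsame_gen (by norm_num)
  intro q hle hq hne
  interval_cases q <;> first | (exact absurd rfl hne) | (revert hq; decide)

lemma hsame28 : ∀ q : ℕ, q.Prime → q ≠ 7 → (q ∣ 28 ↔ q ∣ 2) := by
  apply hsame_gen (by norm_num)
  intro q hle hq hne
  interval_cases q <;> first | (exact absurd rfl hne) | (revert hq; decide)

lemma hsame22 : ∀ q : ℕ, q.Prime → q ≠ 11 → (q ∣ 22 ↔ q ∣ 2) := by
  apply hsame_gen (by norm_num)
  intro q hle hq hne
  interval_cases q <;> first | (exact absurd rfl hne) | (revert hq; decide)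

lemma hsame26 : ∀ q : ℕ, q.Prime → q ≠ 13 → (q ∣ 26 ↔ q ∣ 2) := by
  apply hsame_gen (by norm_num)
  intro q hle hq hne
  interval_cases q <;> first | (exact absurd rfl hne) | (revert hq; decide)

theorem ratio_tendsto_values :
    (∀ g ∈ ({10, 20} : Finset ℕ),
      Filter.Tendsto (fun p : ℕ => (Ncount p [g] : ℝ) / (Ncount p [2] : ℝ))
        (Filter.atTop ⊓ Filter.principal {p : ℕ | p.Prime}) (nhds (4 / 3))) ∧
    (∀ g ∈ ({14, 28} : Finset ℕ),
      Filter.Tendsto (fun p : ℕ => (Ncount p [g] : ℝ) / (Ncount p [2] : ℝ))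
        (Filter.atTop ⊓ Filter.principal {p : ℕ | p.Prime}) (nhds (6 / 5))) ∧
    Filter.Tendsto (fun p : ℕ => (Ncount p [22] : ℝ) / (Ncount p [2] : ℝ))
      (Filter.atTop ⊓ Filter.principal {p : ℕ | p.Prime}) (nhds (10 / 9)) ∧
    Filter.Tendsto (fun p : ℕ => (Ncount p [26] : ℝ) / (Ncount p [2] : ℝ))
      (Filter.atTop ⊓ Filter.principal {p : ℕ | p.Prime}) (nhds (12 / 11)) := by
  have h5 : Nat.Prime 5 := by norm_num
  have h7 : Nat.Prime 7 := by norm_num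
  have h11 : Nat.Prime 11 := by norm_num
  have h13 : Nat.Prime 13 := by norm_num
  refine ⟨?_, ?_, ?_, ?_⟩
  · intro g hg
    rcases Finset.mem_insert.mp hg with rfl | hg
    · have := main_limit (g := 10) (Q := 5) h5 (by norm_num) (by norm_num) hsame10
        (by norm_num) (by norm_num) (by norm_num)
      convert this using 2
      norm_num
    · rw [Finset.mem_singleton.mp hg]
      have := main_limit (g := 20) (Q := 5) h5 (by norm_num) (by norm_num) hsame20
        (by norm_num) (by norm_num) (by norm_num)
      convert this using 2
      norm_num
  · intro g hg
    rcases Finset.mem_insert.mp hg with rfl | hg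
    · have := main_limit (g := 14) (Q := 7) h7 (by norm_num) (by norm_num) hsame14
        (by norm_num) (by norm_num) (by norm_num)
      convert this using 2
      norm_num
    · rw [Finset.mem_singleton.mp hg]
      have := main_limit (g := 28) (Q := 7) h7 (by norm_num) (by norm_num) hsame28
        (by norm_num) (by norm_num) (by norm_num)
      convert this using 2
      norm_num
  · have := main_limit (g := 22) (Q := 11) h11 (by norm_num) (by norm_num) hsame22
      (by norm_num) (by norm_num) (by norm_num)
    convert this using 2
    norm_num
  · have := main_limit (g := 26) (Q := 13) h13 (by norm_num) (by norm_num) hsame26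
      (by norm_num) (by norm_num) (by norm_num)
    convert this using 2
    norm_num
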